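/- The contrastive loss admits the second-order Taylor expansion around the prototype: as δ → 0, f(δ) − [ f(0) + (1/τ)⟨m − μ_s, δ⟩ + (1/(2τ²))( Σ_k w_k ⟨δ, μ_k⟩² − ⟨δ, m⟩² ) ] = o(‖δ‖²), where f(δ) = l(μ_s + δ) and m = Σ_k w_k μ_k. That is, the second-order term of the loss in the perturbation δ is the quadratic form δᵀ[ (1/(2τ²))( Σ_k w_k μ_k μ_kᵀ − m mᵀ ) ]δ. -/

import Mathlib

open scoped RealInnerProductSpace BigOperators Topology


open Asymptotics Filter

lemma exp_taylor2' : (fun t : ℝ => Real.exp t - (1 + t + t ^ 2 / 2)) =o[𝓝 0] fun t => t ^ 2 := by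
  have hO : (fun t : ℝ => Real.exp t - (1 + t + t ^ 2 / 2)) =O[𝓝 0] fun t => t ^ 3 := by
    rw [Asymptotics.isBigO_iff]
    refine ⟨1, ?_⟩
    have h1 : ∀ᶠ t : ℝ in 𝓝 0, |t| ≤ 1 := by
      filter_upwards [Metric.ball_mem_nhds (0 : ℝ) one_pos] with t ht
      rw [Metric.mem_ball, Real.dist_eq, sub_zero] at ht
      exact le_of_lt ht
    filter_upwards [h1] with t ht
    have hb := Real.exp_bound ht (n := 3) (by norm_num)
    have hsum : (∑ i ∈ Finset.range 3, t ^ i / i.factorial) = 1 + t + t ^ 2 / 2 := by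
      norm_num [Finset.sum_range_succ, Nat.factorial]
    rw [hsum] at hb
    have hb' : |Real.exp t - (1 + t + t ^ 2 / 2)| ≤ |t| ^ 3 * (4 / 18) := by
      convert hb using 3 <;> norm_num [Nat.factorial]
    calc ‖Real.exp t - (1 + t + t ^ 2 / 2)‖ ≤ |t| ^ 3 * (4 / 18) := hb'
      _ ≤ 1 * ‖t ^ 3‖ := by
          rw [norm_pow, Real.norm_eq_abs, one_mul]
          nlinarith [pow_nonneg (abs_nonneg t) 3]
  exact hO.trans_isLittleO (isLittleO_pow_pow (by norm_num))

lemma log_taylor2' : (fun t : ℝ => Real.log (1 + t) - (t - t ^ 2 / 2)) =o[𝓝 0] fun t => t ^ 2 := by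
  have hO : (fun t : ℝ => Real.log (1 + t) - (t - t ^ 2 / 2)) =O[𝓝 0] fun t => t ^ 3 := by
    rw [Asymptotics.isBigO_iff]
    refine ⟨2, ?_⟩
    have h1 : ∀ᶠ t : ℝ in 𝓝 0, |t| ≤ 1/2 := by
      filter_upwards [Metric.ball_mem_nhds (0 : ℝ) (by norm_num : (0:ℝ) < 1/2)] with t ht
      rw [Metric.mem_ball, Real.dist_eq, sub_zero] at ht
      linarith
    filter_upwards [h1] with t ht
    have habs : |(-t)| < 1 := by rw [abs_neg]; linarith [abs_nonneg t]
    have hb := Real.abs_log_sub_add_sum_range_le habs 2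
    have hsum : (∑ i ∈ Finset.range 2, (-t) ^ (i + 1) / (i + 1)) = -t + t ^ 2 / 2 := by
      simp [Finset.sum_range_succ]
      ring
    rw [hsum] at hb
    have heq : (-t + t ^ 2 / 2) + Real.log (1 - (-t)) = Real.log (1 + t) - (t - t ^ 2 / 2) := by
      ring_nf
    rw [heq, abs_neg] at hb
    calc ‖Real.log (1 + t) - (t - t ^ 2 / 2)‖ ≤ |t| ^ (2 + 1) / (1 - |t|) := hb
      _ ≤ 2 * ‖t ^ 3‖ := by
          rw [div_le_iff₀ (by linarith [abs_nonneg t])]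
          rw [norm_pow, Real.norm_eq_abs]
          have h3 : (0:ℝ) ≤ |t| ^ 3 := pow_nonneg (abs_nonneg t) 3
          have he : |t| ^ (2 + 1) = |t| ^ 3 := by norm_num
          rw [he]
          nlinarith [mul_nonneg h3 (by linarith : (0:ℝ) ≤ 1 - 2 * |t|)]
  exact hO.trans_isLittleO (isLittleO_pow_pow (by norm_num))

/-- The contrastive loss admits the second-order Taylor expansion around the
prototype: as `δ → 0`,
`f(δ) − [f(0) + (1/τ)⟨m − μ_s, δ⟩ + (1/(2τ²))(Σ_k w_k ⟨δ, μ_k⟩² − ⟨δ, m⟩²)] = o(‖δ‖²)`,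
where `f(δ) = l(μ_s + δ)` and `m = Σ_k w_k μ_k`. -/
theorem contrastive_loss_second_order_expansion
    {d : ℕ} {K : Type*} [Fintype K]
    (μ : K → EuclideanSpace ℝ (Fin d)) (s : K) (τ : ℝ) (hτ : 0 < τ)
    (l : EuclideanSpace ℝ (Fin d) → ℝ)
    (hl : ∀ z, l z =
      -Real.log (Real.exp (⟪z, μ s⟫ / τ) / ∑ k, Real.exp (⟪z, μ k⟫ / τ)))
    (Z : ℝ) (hZ : Z = ∑ k, Real.exp (⟪μ s, μ k⟫ / τ))
    (w : K → ℝ) (hw : ∀ k, w k = Real.exp (⟪μ s, μ k⟫ / τ) / Z)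
    (m : EuclideanSpace ℝ (Fin d)) (hm : m = ∑ k, w k • μ k) :
    (fun δ : EuclideanSpace ℝ (Fin d) =>
        l (μ s + δ)
          - (l (μ s + 0) + (1 / τ) * ⟪m - μ s, δ⟫
              + (1 / (2 * τ ^ 2)) * ((∑ k, w k * ⟪δ, μ k⟫ ^ 2) - ⟪δ, m⟫ ^ 2)))
      =o[𝓝 0] fun δ => ‖δ‖ ^ 2 := by
  classical
  have hτ0 : τ ≠ 0 := ne_of_gt hτ
  have hZpos : 0 < Z := by
    rw [hZ]; exact Finset.sum_pos (fun k _ => Real.exp_pos _) ⟨s, Finset.mem_univ s⟩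
  have hS : ∀ z : EuclideanSpace ℝ (Fin d), (0:ℝ) < ∑ k, Real.exp (⟪z, μ k⟫ / τ) :=
    fun z => Finset.sum_pos (fun k _ => Real.exp_pos _) ⟨s, Finset.mem_univ s⟩
  have hsumw : ∑ k, w k = 1 := by
    simp only [hw]
    rw [← Finset.sum_div, ← hZ, div_self (ne_of_gt hZpos)]
  -- abbreviations
  set a : K → EuclideanSpace ℝ (Fin d) → ℝ := fun k δ => ⟪δ, μ k⟫ / τ with ha
  set A : EuclideanSpace ℝ (Fin d) → ℝ :=
    fun δ => ∑ k, w k * (Real.exp (a k δ) - 1) with hA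
  set L : EuclideanSpace ℝ (Fin d) → ℝ := fun δ => ⟪δ, m⟫ / τ with hL
  set Q : EuclideanSpace ℝ (Fin d) → ℝ :=
    fun δ => ∑ k, (w k / 2) * (a k δ) ^ 2 with hQdef
  -- basic asymptotics of linear forms
  have hinnO : ∀ v : EuclideanSpace ℝ (Fin d),
      (fun δ : EuclideanSpace ℝ (Fin d) => ⟪δ, v⟫ / τ) =O[𝓝 0] fun δ => ‖δ‖ := by
    intro v
    rw [Asymptotics.isBigO_iff]
    refine ⟨‖v‖ / τ, Filter.Eventually.of_forall fun δ => ?_⟩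
    rw [Real.norm_eq_abs, norm_norm, abs_div, abs_of_pos hτ]
    calc |⟪δ, v⟫| / τ ≤ (‖δ‖ * ‖v‖) / τ := by
          gcongr; exact abs_real_inner_le_norm _ _
      _ = ‖v‖ / τ * ‖δ‖ := by ring
  have haO : ∀ k, (a k) =O[𝓝 0] fun δ => ‖δ‖ := fun k => hinnO (μ k)
  have hLO : L =O[𝓝 0] fun δ => ‖δ‖ := hinnO m
  have hat : ∀ k, Filter.Tendsto (a k) (𝓝 0) (𝓝 0) := by
    intro k
    have hc : Continuous (a k) := (continuous_id.inner continuous_const).div_const τ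
    have h0 : a k 0 = 0 := by simp [ha]
    simpa [h0] using hc.tendsto 0
  -- per-species exponential expansion
  have hk : ∀ k, (fun δ => Real.exp (a k δ) - (1 + a k δ + (a k δ) ^ 2 / 2))
      =o[𝓝 0] fun δ : EuclideanSpace ℝ (Fin d) => ‖δ‖ ^ 2 := fun k =>
    (exp_taylor2'.comp_tendsto (hat k)).trans_isBigO ((haO k).pow 2)
  have hsumo : (fun δ => ∑ k, w k * (Real.exp (a k δ) - (1 + a k δ + (a k δ) ^ 2 / 2)))
      =o[𝓝 0] fun δ : EuclideanSpace ℝ (Fin d) => ‖δ‖ ^ 2 :=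
    Asymptotics.IsLittleO.fun_sum fun k _ => (hk k).const_mul_left (w k)
  -- L as a weighted sum
  have hLsum : ∀ δ, L δ = ∑ k, w k * a k δ := by
    intro δ
    simp only [hL, hm, inner_sum, real_inner_smul_right, ha]
    rw [Finset.sum_div]
    exact Finset.sum_congr rfl fun k _ => by ring
  have hALQ : (fun δ => A δ - L δ - Q δ) =o[𝓝 0]
      fun δ : EuclideanSpace ℝ (Fin d) => ‖δ‖ ^ 2 := by
    refine hsumo.congr_left fun δ => ?_
    rw [hLsum δ, hA, hQdef, ← Finset.sum_sub_distrib, ← Finset.sum_sub_distrib]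
    exact Finset.sum_congr rfl fun k _ => by ring
  -- big-O facts
  have hQO : Q =O[𝓝 0] fun δ : EuclideanSpace ℝ (Fin d) => ‖δ‖ ^ 2 :=
    Asymptotics.IsBigO.fun_sum fun k _ => (((haO k).pow 2).const_mul_left (w k / 2))
  have hsq1 : (fun δ : EuclideanSpace ℝ (Fin d) => ‖δ‖ ^ 2) =O[𝓝 0] fun δ => ‖δ‖ := by
    have := isLittleO_norm_pow_norm_pow (E' := EuclideanSpace ℝ (Fin d)) (by norm_num : 1 < 2)
    simpa using this.isBigO
  have hAO : A =O[𝓝 0] fun δ : EuclideanSpace ℝ (Fin d) => ‖δ‖ := by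
    have hEq : A = fun δ => (A δ - L δ - Q δ) + L δ + Q δ := by funext δ; ring
    rw [hEq]
    exact ((hALQ.isBigO.trans hsq1).add hLO).add (hQO.trans hsq1)
  have hAt : Filter.Tendsto A (𝓝 0) (𝓝 0) := hAO.trans_tendsto tendsto_norm_zero
  -- logarithm expansion
  have hlog : (fun δ => Real.log (1 + A δ) - (A δ - (A δ) ^ 2 / 2))
      =o[𝓝 0] fun δ : EuclideanSpace ℝ (Fin d) => ‖δ‖ ^ 2 :=
    (log_taylor2'.comp_tendsto hAt).trans_isBigO (hAO.pow 2)
  -- square difference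
  have h3 : (fun δ : EuclideanSpace ℝ (Fin d) => ‖δ‖ ^ 2 * ‖δ‖) =o[𝓝 0]
      fun δ => ‖δ‖ ^ 2 := by
    have := isLittleO_norm_pow_norm_pow (E' := EuclideanSpace ℝ (Fin d))
      (by norm_num : 2 < 3)
    refine this.congr_left fun δ => by ring
  have hsq : (fun δ => (A δ) ^ 2 - (L δ) ^ 2) =o[𝓝 0]
      fun δ : EuclideanSpace ℝ (Fin d) => ‖δ‖ ^ 2 := by
    have hAmL : (fun δ => A δ - L δ) =O[𝓝 0]
        fun δ : EuclideanSpace ℝ (Fin d) => ‖δ‖ ^ 2 := by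
      have hEq : (fun δ => A δ - L δ) = fun δ => (A δ - L δ - Q δ) + Q δ := by
        funext δ; ring
      rw [hEq]; exact hALQ.isBigO.add hQO
    have hApL : (fun δ => A δ + L δ) =O[𝓝 0]
        fun δ : EuclideanSpace ℝ (Fin d) => ‖δ‖ := hAO.add hLO
    have := (hAmL.mul hApL).trans_isLittleO h3
    refine this.congr_left fun δ => by ring
  -- assemble the little-o combination
  have hfinal := (hlog.add hALQ).add (hsq.const_mul_left (-(1/2)))
  -- identify the target function
  refine hfinal.congr_left fun δ => ?_
  -- rewrite l
  have hlz : ∀ z, l z = Real.log (∑ k, Real.exp (⟪z, μ k⟫ / τ)) - ⟪z, μ s⟫ / τ := by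
    intro z
    rw [hl z, Real.log_div (Real.exp_ne_zero _) (ne_of_gt (hS z)), Real.log_exp]
    ring
  have hSA : ∀ δ, 1 + A δ = (∑ k, Real.exp (⟪μ s + δ, μ k⟫ / τ)) / Z := by
    intro δ
    have h1 : A δ = (∑ k, w k * Real.exp (a k δ)) - ∑ k, w k := by
      rw [hA, ← Finset.sum_sub_distrib]
      exact Finset.sum_congr rfl fun k _ => by ring
    rw [h1, hsumw]
    have h2 : (∑ k, w k * Real.exp (a k δ)) = (∑ k, Real.exp (⟪μ s + δ, μ k⟫ / τ)) / Z := by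
      rw [Finset.sum_div]
      refine Finset.sum_congr rfl fun k _ => ?_
      rw [hw k, ha, inner_add_left, add_div, Real.exp_add]
      ring
    rw [h2]; ring
  have hlog1 : Real.log (1 + A δ)
      = Real.log (∑ k, Real.exp (⟪μ s + δ, μ k⟫ / τ)) - Real.log Z := by
    rw [hSA δ, Real.log_div (ne_of_gt (hS _)) (ne_of_gt hZpos)]
  -- the big pointwise computation
  have hQeq : Q δ = (1 / (2 * τ ^ 2)) * (∑ k, w k * ⟪δ, μ k⟫ ^ 2) := by
    rw [hQdef, Finset.mul_sum]
    refine Finset.sum_congr rfl fun k _ => ?_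
    rw [ha]
    field_simp
  have hLeq : L δ = ⟪δ, m⟫ / τ := rfl
  rw [hlz (μ s + δ), hlz (μ s + 0), hlog1]
  rw [add_zero, ← hZ]
  rw [hQeq, hLeq]
  rw [inner_add_left, inner_sub_left, real_inner_comm m δ, real_inner_comm (μ s) δ]
  field_simp
  ring
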